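/- A thin cut is tight: if A is a vertex-cut of minimal capacity among all cuts separating a given pair u, v (vertices or ends), then both A and its complement A* induce connected subgraphs. -/

import Mathlib

open Set

variable {V : Type*}

/-- The coboundary of a vertex set: edges with one endpoint in `A` and one outside. -/
def cobound (G : SimpleGraph V) (A : Set V) : Set (Sym2 V) :=
  {e | e ∈ G.edgeSet ∧ ∃ u v, e = s(u, v) ∧ u ∈ A ∧ v ∉ A}

/-- A cut is a vertex set with finite coboundary. -/
def IsCut (G : SimpleGraph V) (A : Set V) : Prop := (cobound G A).Finite

/-- Capacity of a cut: sum of capacities of coboundary edges. -/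
noncomputable def cap (G : SimpleGraph V) (c : Sym2 V → ℕ) (A : Set V) : ℕ :=
  ∑ᶠ e ∈ cobound G A, c e

/-- A ray in a graph. -/
structure IsRay (G : SimpleGraph V) (r : ℕ → V) : Prop where
  inj : Function.Injective r
  adj : ∀ n, G.Adj (r n) (r (n + 1))

/-- A "point" of `X`: either a vertex or a ray (representing an edge end). -/
def PtIn (G : SimpleGraph V) (A : Set V) :
    V ⊕ {r : ℕ → V // IsRay G r} → Prop
  | Sum.inl v => v ∈ A
  | Sum.inr r => ∃ N, ∀ n ≥ N, r.1 n ∈ A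

/-- A cut separates two points (vertices or ends) if one lies in `A` and the other in `Aᶜ`. -/
def Separates (G : SimpleGraph V) (A : Set V)
    (u v : V ⊕ {r : ℕ → V // IsRay G r}) : Prop :=
  (PtIn G A u ∧ PtIn G Aᶜ v) ∨ (PtIn G Aᶜ u ∧ PtIn G A v)

/-- `A` is thin with respect to `u, v`: it separates them with minimal capacity. -/
def ThinWrt (G : SimpleGraph V) (c : Sym2 V → ℕ) (A : Set V)
    (u v : V ⊕ {r : ℕ → V // IsRay G r}) : Prop :=
  IsCut G A ∧ Separates G A u v ∧
    ∀ B : Set V, IsCut G B → Separates G B u v → cap G c A ≤ cap G c B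

/-- A cut is tight if both sides induce connected subgraphs. -/
def Tight (G : SimpleGraph V) (A : Set V) : Prop :=
  (G.induce A).Connected ∧ (G.induce Aᶜ).Connected

lemma ptIn_mono {G : SimpleGraph V} {A B : Set V} (h : A ⊆ B) :
    ∀ {p}, PtIn G A p → PtIn G B p
  | Sum.inl _, hp => h hp
  | Sum.inr _, ⟨N, hN⟩ => ⟨N, fun n hn => h (hN n hn)⟩

lemma cobound_compl (G : SimpleGraph V) (A : Set V) :
    cobound G Aᶜ = cobound G A := by
  ext e
  constructor <;> rintro ⟨he, x, y, rfl, hx, hy⟩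
  · exact ⟨he, y, x, Sym2.eq_swap, not_not.mp hy, hx⟩
  · exact ⟨he, y, x, Sym2.eq_swap, hy, not_not_intro hx⟩

/-- Key lemma: the side `A` of a minimal cut induces a connected graph. -/
lemma side_connected (G : SimpleGraph V) (hconn : G.Connected)
    (c : Sym2 V → ℕ) (hc : ∀ e ∈ G.edgeSet, 1 ≤ c e)
    (A : Set V) (hcut : IsCut G A)
    (p q : V ⊕ {r : ℕ → V // IsRay G r})
    (hp : PtIn G A p) (hq : PtIn G Aᶜ q)
    (hmin : ∀ B : Set V, IsCut G B → PtIn G B p → PtIn G Bᶜ q →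
      cap G c A ≤ cap G c B) :
    (G.induce A).Connected := by
  classical
  -- choose an anchor vertex `a₀ ∈ A`
  obtain ⟨a₀, ha₀, hPt⟩ :
      ∃ a₀, ∃ ha₀ : a₀ ∈ A,
        PtIn G {w | ∃ hw : w ∈ A, (G.induce A).Reachable ⟨a₀, ha₀⟩ ⟨w, hw⟩} p := by
    cases p with
    | inl a =>
        exact ⟨a, hp, ⟨hp, SimpleGraph.Reachable.refl _⟩⟩
    | inr r =>
        obtain ⟨N, hN⟩ := hp
        refine ⟨r.1 N, hN N le_rfl, N, fun n hn => ?_⟩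
        induction n, hn using Nat.le_induction with
        | base => exact ⟨hN N le_rfl, SimpleGraph.Reachable.refl _⟩
        | succ n hn ih =>
            obtain ⟨hw, hr⟩ := ih
            exact ⟨hN (n + 1) (by omega),
              hr.trans (SimpleGraph.Adj.reachable (by simpa using r.2.adj n))⟩
  set P : Set V := {w | ∃ hw : w ∈ A, (G.induce A).Reachable ⟨a₀, ha₀⟩ ⟨w, hw⟩}
      with hPdef
  have hPA : P ⊆ A := fun w hw => hw.1
  -- closure of P under adjacency within A
  have hclos : ∀ x ∈ P, ∀ y ∈ A, G.Adj x y → y ∈ P := by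
    rintro x ⟨hxA, hxr⟩ y hyA hadj
    exact ⟨hyA, hxr.trans (SimpleGraph.Adj.reachable (by simpa using hadj))⟩
  have hcoboundPsub : cobound G P ⊆ cobound G A := by
    rintro e ⟨he, x, y, rfl, hx, hy⟩
    have hadj : G.Adj x y := (SimpleGraph.mem_edgeSet G).mp he
    have hyA : y ∉ A := fun hyA => hy (hclos x hx y hyA hadj)
    exact ⟨he, x, y, rfl, hPA hx, hyA⟩
  have hcutP : IsCut G P := hcut.subset hcoboundPsub
  -- minimality applied to P
  have hle : cap G c A ≤ cap G c P := by
    refine hmin P hcutP hPt (ptIn_mono ?_ hq)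
    exact fun w hw hwP => hw (hPA hwP)
  -- now show A is connected; suppose some b ∈ A with b ∉ P
  have hall : ∀ b ∈ A, b ∈ P := by
    intro b hbA
    by_contra hbP
    -- component of b in A
    set Q : Set V := {w | ∃ hw : w ∈ A, (G.induce A).Reachable ⟨b, hbA⟩ ⟨w, hw⟩}
        with hQdef
    have hQA : Q ⊆ A := fun w hw => hw.1
    have hclosQ : ∀ x ∈ Q, ∀ y ∈ A, G.Adj x y → y ∈ Q := by
      rintro x ⟨hxA, hxr⟩ y hyA hadj
      exact ⟨hyA, hxr.trans (SimpleGraph.Adj.reachable (by simpa using hadj))⟩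
    have hQP : ∀ w ∈ Q, w ∉ P := by
      rintro w ⟨hwA, hwr⟩ ⟨hwA', hwr'⟩
      exact hbP ⟨hbA, hwr'.trans (by convert hwr.symm)⟩
    have hbQ : b ∈ Q := ⟨hbA, SimpleGraph.Reachable.refl _⟩
    have ha₀Q : a₀ ∉ Q := fun h => hQP a₀ h ⟨ha₀, SimpleGraph.Reachable.refl _⟩
    obtain ⟨w⟩ := hconn.preconnected b a₀
    obtain ⟨d, _, hd1, hd2⟩ := w.exists_boundary_dart Q hbQ ha₀Q
    have hadj : G.Adj d.fst d.snd := d.adj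
    have hsndA : d.snd ∉ A := fun h => hd2 (hclosQ d.fst hd1 d.snd h hadj)
    -- the edge e₀ witnesses strict inequality
    set e₀ : Sym2 V := s(d.fst, d.snd) with he₀
    have he₀A : e₀ ∈ cobound G A :=
      ⟨(SimpleGraph.mem_edgeSet G).mpr hadj, d.fst, d.snd, rfl, hQA hd1, hsndA⟩
    have he₀P : e₀ ∉ cobound G P := by
      rintro ⟨-, x, y, hxy, hx, hy⟩
      rcases Sym2.eq_iff.mp hxy with ⟨rfl, rfl⟩ | ⟨rfl, rfl⟩
      · exact hQP _ hd1 hx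
      · exact hsndA (hPA hx)
    have hlt : cap G c P < cap G c A := by
      rw [cap, cap, finsum_mem_eq_finite_toFinset_sum _ hcutP,
        finsum_mem_eq_finite_toFinset_sum _ hcut]
      refine Finset.sum_lt_sum_of_subset ?_ (i := e₀) ?_ ?_ ?_ ?_
      · exact Set.Finite.toFinset_subset_toFinset.mpr hcoboundPsub
      · exact (Set.Finite.mem_toFinset hcut).mpr he₀A
      · exact fun h => he₀P ((Set.Finite.mem_toFinset hcutP).mp h)
      · exact hc e₀ ((SimpleGraph.mem_edgeSet G).mpr hadj)
      · intro j _ _; exact Nat.zero_le _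
    exact absurd hle (not_le.mpr hlt)
  have : Nonempty (A : Set V) := ⟨⟨a₀, ha₀⟩⟩
  rw [SimpleGraph.connected_iff]
  refine ⟨fun x y => ?_, this⟩
  obtain ⟨x, hx⟩ := x
  obtain ⟨y, hy⟩ := y
  obtain ⟨hx', hxr⟩ := hall x hx
  obtain ⟨hy', hyr⟩ := hall y hy
  exact hxr.symm.trans hyr

/-- a thin cut is tight. -/
theorem thin_is_tight (G : SimpleGraph V) (hconn : G.Connected)
    (c : Sym2 V → ℕ) (hc : ∀ e ∈ G.edgeSet, 1 ≤ c e)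
    (u v : V ⊕ {r : ℕ → V // IsRay G r}) (A : Set V)
    (hA : ThinWrt G c A u v) : Tight G A := by
  obtain ⟨hcut, hsep, hmin⟩ := hA
  have hcut' : IsCut G Aᶜ := by rwa [IsCut, cobound_compl]
  have hcap' : cap G c Aᶜ = cap G c A := by rw [cap, cap, cobound_compl]
  constructor
  · rcases hsep with ⟨hu, hv⟩ | ⟨hu, hv⟩
    · exact side_connected G hconn c hc A hcut u v hu hv
        (fun B hB h1 h2 => hmin B hB (Or.inl ⟨h1, h2⟩))
    · exact side_connected G hconn c hc A hcut v u hv hu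
        (fun B hB h1 h2 => hmin B hB (Or.inr ⟨h2, h1⟩))
  · rcases hsep with ⟨hu, hv⟩ | ⟨hu, hv⟩
    · refine side_connected G hconn c hc Aᶜ hcut' v u hv
        (ptIn_mono (compl_compl A).symm.subset hu) (fun B hB h1 h2 => ?_)
      rw [hcap']
      exact (hmin Bᶜ (by rwa [IsCut, cobound_compl])
        (Or.inl ⟨h2, ptIn_mono (compl_compl B).symm.subset h1⟩)).trans_eq
        (by rw [cap, cap, cobound_compl])
    · refine side_connected G hconn c hc Aᶜ hcut' u v hu
        (ptIn_mono (compl_compl A).symm.subset hv) (fun B hB h1 h2 => ?_)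
      rw [hcap']
      exact (hmin Bᶜ (by rwa [IsCut, cobound_compl])
        (Or.inr ⟨ptIn_mono (compl_compl B).symm.subset h1, h2⟩)).trans_eq
        (by rw [cap, cap, cobound_compl])
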